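/- Condition Number Theorem for Graeffe iteration: let f be a monic degree-d complex polynomial with roots ζ₁,...,ζ_d, no two of which have the same modulus. Define ρ(f) = min over pairs with |ζᵢ| < |ζⱼ| of (1 - |ζᵢ|/|ζⱼ|), and let Σ_G be the set of degree-d polynomials having two distinct roots of equal modulus. Then the projective distance d_P(f, Σ_G) = min_{h ∈ Σ_G, λ ∈ ℂ} ‖f - λh‖_d / ‖f‖_d satisfies ρ(f) ≥ d_P(f, Σ_G)/√d. -/

import Mathlib

open Polynomial Finset

/-- The Weyl (Bombieri) norm on polynomials of degree at most `m`. -/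
noncomputable def weylNorm (m : ℕ) (p : Polynomial ℂ) : ℝ :=
  Real.sqrt (∑ i ∈ Finset.range (m + 1), ‖p.coeff i‖ ^ 2 / (Nat.choose m i))

/-- `Σ_G`: the locus of ill-posed problems, i.e. degree-`d` polynomials having
two distinct roots of equal modulus. -/
def SigmaG (d : ℕ) : Set (Polynomial ℂ) :=
  {h | h.natDegree = d ∧ ∃ z w : ℂ, z ≠ w ∧ h.IsRoot z ∧ h.IsRoot w ∧
    ‖z‖ = ‖w‖}


private lemma cross_re (u v : ℂ) : (u * (starRingEnd ℂ) v).re = (v * (starRingEnd ℂ) u).re := by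
  rw [← Complex.conj_re (u * (starRingEnd ℂ) v)]
  simp [map_mul, mul_comm]

private lemma perj (m j : ℕ) (hj : j ≤ m + 1) (s2 pj qj : ℝ)
    (hqj : j = m + 1 → qj = 0) :
    ((m:ℝ)+2) * pj / (Nat.choose (m+2) (j+1) : ℝ)
      + ((m:ℝ)+2) * s2 * pj / (Nat.choose (m+2) j : ℝ)
      - 2*((m:ℝ)+2) * qj / (Nat.choose (m+2) (j+1) : ℝ)
    = (1+s2) * pj / (Nat.choose (m+1) j : ℝ)
      + (j:ℝ)^2 * pj / (((m:ℝ)+1) * (Nat.choose m (j-1) : ℝ))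
      + s2 * ((m:ℝ)+1-(j:ℝ))^2 * pj / (((m:ℝ)+1) * (Nat.choose m j : ℝ))
      - 2*((j:ℝ)+1)*((m:ℝ)+1-(j:ℝ)) * qj / (((m:ℝ)+1) * (Nat.choose m j : ℝ)) := by
  rcases Nat.lt_or_ge j (m+1) with hjm | hjm
  · -- j ≤ m : all binomials positive
    have hjm' : j ≤ m := Nat.lt_succ_iff.mp hjm
    have h0 : (0:ℝ) < (Nat.choose (m+2) j : ℝ) := by
      exact_mod_cast Nat.cast_pos.mpr (Nat.choose_pos (by omega))
    have h1 : (0:ℝ) < (Nat.choose (m+2) (j+1) : ℝ) := by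
      exact_mod_cast Nat.cast_pos.mpr (Nat.choose_pos (by omega))
    have h2 : (0:ℝ) < (Nat.choose (m+1) j : ℝ) := by
      exact_mod_cast Nat.cast_pos.mpr (Nat.choose_pos (by omega))
    have h3 : (0:ℝ) < (Nat.choose m j : ℝ) := by
      exact_mod_cast Nat.cast_pos.mpr (Nat.choose_pos (by omega))
    have h4 : (0:ℝ) < (Nat.choose m (j-1) : ℝ) := by
      exact_mod_cast Nat.cast_pos.mpr (Nat.choose_pos (by omega))
    have hm1 : ((m:ℝ)+1) ≠ 0 := by positivity
    -- binomial identities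
    have c1 : ((Nat.choose (m+2) (j+1) : ℝ)) * ((j:ℝ)+1) = ((m:ℝ)+2) * (Nat.choose (m+1) j : ℝ) := by
      have e2' := congrArg (Nat.cast : ℕ → ℝ) (Nat.add_one_mul_choose_eq (m+1) j)
      push_cast at e2'
      linarith
    have c2 : ((Nat.choose (m+2) j : ℝ)) * ((m:ℝ)+2-(j:ℝ)) = ((m:ℝ)+2) * (Nat.choose (m+1) j : ℝ) := by
      have e1' := congrArg (Nat.cast : ℕ → ℝ) (Nat.choose_succ_right_eq (m+2) j)
      have e2' := congrArg (Nat.cast : ℕ → ℝ) (Nat.add_one_mul_choose_eq (m+1) j)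
      push_cast [Nat.cast_sub (show j ≤ m+2 by omega)] at e1'
      push_cast at e2'
      linarith
    have c4 : ((Nat.choose (m+1) j : ℝ)) * ((m:ℝ)+1-(j:ℝ)) = ((m:ℝ)+1) * (Nat.choose m j : ℝ) := by
      have e1' := congrArg (Nat.cast : ℕ → ℝ) (Nat.choose_succ_right_eq (m+1) j)
      have e2' := congrArg (Nat.cast : ℕ → ℝ) (Nat.add_one_mul_choose_eq m j)
      push_cast [Nat.cast_sub (show j ≤ m+1 by omega)] at e1'
      push_cast at e2'
      linarith
    have a1 : ((m:ℝ)+2) * pj / (Nat.choose (m+2) (j+1) : ℝ) = ((j:ℝ)+1) * pj / (Nat.choose (m+1) j : ℝ) := by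
      rw [div_eq_div_iff h1.ne' h2.ne']
      linear_combination (-pj) * c1
    have a2 : ((m:ℝ)+2) * s2 * pj / (Nat.choose (m+2) j : ℝ) = ((m:ℝ)+2-(j:ℝ)) * s2 * pj / (Nat.choose (m+1) j : ℝ) := by
      rw [div_eq_div_iff h0.ne' h2.ne']
      linear_combination (-s2 * pj) * c2
    have a3 : 2*((m:ℝ)+2) * qj / (Nat.choose (m+2) (j+1) : ℝ) = 2*((j:ℝ)+1) * qj / (Nat.choose (m+1) j : ℝ) := by
      rw [div_eq_div_iff h1.ne' h2.ne']
      linear_combination (-2 * qj) * c1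
    have a5 : s2 * ((m:ℝ)+1-(j:ℝ))^2 * pj / (((m:ℝ)+1) * (Nat.choose m j : ℝ)) = s2 * ((m:ℝ)+1-(j:ℝ)) * pj / (Nat.choose (m+1) j : ℝ) := by
      rw [div_eq_div_iff (by positivity) h2.ne']
      linear_combination (s2 * ((m:ℝ)+1-(j:ℝ)) * pj) * c4
    have a6 : 2*((j:ℝ)+1)*((m:ℝ)+1-(j:ℝ)) * qj / (((m:ℝ)+1) * (Nat.choose m j : ℝ)) = 2*((j:ℝ)+1) * qj / (Nat.choose (m+1) j : ℝ) := by
      rw [div_eq_div_iff (by positivity) h2.ne']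
      linear_combination (2*((j:ℝ)+1) * qj) * c4
    have a4 : (j:ℝ)^2 * pj / (((m:ℝ)+1) * (Nat.choose m (j-1) : ℝ)) = (j:ℝ) * pj / (Nat.choose (m+1) j : ℝ) := by
      rcases Nat.eq_zero_or_pos j with hj0 | hj0
      · subst hj0; simp
      · have c3 : ((Nat.choose (m+1) j : ℝ)) * (j:ℝ) = ((m:ℝ)+1) * (Nat.choose m (j-1) : ℝ) := by
          have e2 := Nat.add_one_mul_choose_eq m (j-1)
          rw [show j - 1 + 1 = j by omega] at e2
          have e2' := congrArg (Nat.cast : ℕ → ℝ) e2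
          push_cast at e2'
          linarith
        rw [div_eq_div_iff (by positivity) h2.ne']
        linear_combination ((j:ℝ) * pj) * c3
    rw [a1, a2, a3, a4, a5, a6]
    field_simp
    ring
  · -- j = m+1
    have hj1 : j = m + 1 := by omega
    subst hj1
    have hq : qj = 0 := hqj rfl
    have e0 : ((m:ℝ)+1-((m+1:ℕ):ℝ)) = 0 := by push_cast; ring
    rw [hq]
    simp only [Nat.choose_self, Nat.choose_succ_self, Nat.add_sub_cancel]
    rw [e0]
    rw [show Nat.choose (m+2) (m+1) = m+2 from Nat.choose_succ_self_right (m+1)]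
    norm_num
    have hm2 : ((m:ℝ)+2) ≠ 0 := by positivity
    have hm1 : ((m:ℝ)+1) ≠ 0 := by positivity
    push_cast
    field_simp
    ring

private lemma sum_identity (m : ℕ) (s2 : ℝ) (p q : ℕ → ℝ)
    (hp : p (m+2) = 0) (hq : q (m+1) = 0) :
    ((m:ℝ)+2) * (∑ i ∈ range (m+2), (p i + s2 * p (i+1) - 2*q i)/(Nat.choose (m+2) (i+1) : ℝ)
        + s2 * p 0)
    = (1+s2) * ∑ j ∈ range (m+2), p j / (Nat.choose (m+1) j : ℝ)
      + ∑ k ∈ range (m+1),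
          ( ((k:ℝ)+1)^2 * p (k+1) + s2*((m:ℝ)+1-(k:ℝ))^2 * p k
            - 2*((k:ℝ)+1)*((m:ℝ)+1-(k:ℝ))*q k ) / (((m:ℝ)+1) * (Nat.choose m k : ℝ)) := by
  have hshift : ∑ i ∈ range (m+2), p (i+1) / (Nat.choose (m+2) (i+1) : ℝ)
      = ∑ j ∈ range (m+2), p j / (Nat.choose (m+2) j : ℝ) - p 0 := by
    have e := Finset.sum_range_succ' (fun j => p j / (Nat.choose (m+2) j : ℝ)) (m+2)
    have e2 := Finset.sum_range_succ (fun j => p j / (Nat.choose (m+2) j : ℝ)) (m+2)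
    simp only [Nat.choose_zero_right, Nat.cast_one, div_one, hp, Nat.choose_self, zero_div] at e e2
    rw [e2] at e
    linarith
  have lhs_eq : ((m:ℝ)+2) * (∑ i ∈ range (m+2), (p i + s2 * p (i+1) - 2*q i)/(Nat.choose (m+2) (i+1) : ℝ)
        + s2 * p 0)
      = ∑ j ∈ range (m+2),
          (((m:ℝ)+2) * p j / (Nat.choose (m+2) (j+1) : ℝ)
            + ((m:ℝ)+2) * s2 * p j / (Nat.choose (m+2) j : ℝ)
            - 2*((m:ℝ)+2) * q j / (Nat.choose (m+2) (j+1) : ℝ)) := by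
    have split : ∑ i ∈ range (m+2), (p i + s2 * p (i+1) - 2*q i)/(Nat.choose (m+2) (i+1) : ℝ)
        = (∑ i ∈ range (m+2), p i / (Nat.choose (m+2) (i+1) : ℝ))
          + s2 * (∑ i ∈ range (m+2), p (i+1) / (Nat.choose (m+2) (i+1) : ℝ))
          - 2 * (∑ i ∈ range (m+2), q i / (Nat.choose (m+2) (i+1) : ℝ)) := by
      rw [Finset.mul_sum, Finset.mul_sum, ← Finset.sum_add_distrib, ← Finset.sum_sub_distrib]
      exact Finset.sum_congr rfl (fun i _ => by ring)
    rw [split, hshift]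
    rw [Finset.sum_sub_distrib, Finset.sum_add_distrib]
    have r1 : ∑ x ∈ range (m+2), ((m:ℝ)+2) * p x / (Nat.choose (m+2) (x+1) : ℝ)
        = ((m:ℝ)+2) * ∑ x ∈ range (m+2), p x / (Nat.choose (m+2) (x+1) : ℝ) := by
      rw [Finset.mul_sum]; exact Finset.sum_congr rfl (fun i _ => by ring)
    have r2 : ∑ x ∈ range (m+2), ((m:ℝ)+2) * s2 * p x / (Nat.choose (m+2) x : ℝ)
        = (((m:ℝ)+2) * s2) * ∑ x ∈ range (m+2), p x / (Nat.choose (m+2) x : ℝ) := by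
      rw [Finset.mul_sum]; exact Finset.sum_congr rfl (fun i _ => by ring)
    have r3 : ∑ x ∈ range (m+2), 2*((m:ℝ)+2) * q x / (Nat.choose (m+2) (x+1) : ℝ)
        = (2*((m:ℝ)+2)) * ∑ x ∈ range (m+2), q x / (Nat.choose (m+2) (x+1) : ℝ) := by
      rw [Finset.mul_sum]; exact Finset.sum_congr rfl (fun i _ => by ring)
    rw [r1, r2, r3]
    ring
  rw [lhs_eq]
  have rhs2 : ∑ k ∈ range (m+1),
          ( ((k:ℝ)+1)^2 * p (k+1) + s2*((m:ℝ)+1-(k:ℝ))^2 * p k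
            - 2*((k:ℝ)+1)*((m:ℝ)+1-(k:ℝ))*q k ) / (((m:ℝ)+1) * (Nat.choose m k : ℝ))
      = ∑ j ∈ range (m+2),
          ( (j:ℝ)^2 * p j / (((m:ℝ)+1) * (Nat.choose m (j-1) : ℝ))
            + s2*((m:ℝ)+1-(j:ℝ))^2 * p j / (((m:ℝ)+1) * (Nat.choose m j : ℝ))
            - 2*((j:ℝ)+1)*((m:ℝ)+1-(j:ℝ)) * q j / (((m:ℝ)+1) * (Nat.choose m j : ℝ)) ) := by
    have split2 : ∀ k ∈ range (m+1),
        ( ((k:ℝ)+1)^2 * p (k+1) + s2*((m:ℝ)+1-(k:ℝ))^2 * p k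
            - 2*((k:ℝ)+1)*((m:ℝ)+1-(k:ℝ))*q k ) / (((m:ℝ)+1) * (Nat.choose m k : ℝ))
        = ((k:ℝ)+1)^2 * p (k+1) / (((m:ℝ)+1) * (Nat.choose m k : ℝ))
          + s2*((m:ℝ)+1-(k:ℝ))^2 * p k / (((m:ℝ)+1) * (Nat.choose m k : ℝ))
          - 2*((k:ℝ)+1)*((m:ℝ)+1-(k:ℝ))*q k / (((m:ℝ)+1) * (Nat.choose m k : ℝ)) := by
      intro k _; ring
    rw [Finset.sum_congr rfl split2]
    rw [Finset.sum_sub_distrib, Finset.sum_add_distrib]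
    rw [Finset.sum_sub_distrib, Finset.sum_add_distrib]
    congr 1
    · congr 1
      · have e := Finset.sum_range_succ' (fun j => (j:ℝ)^2 * p j / (((m:ℝ)+1) * (Nat.choose m (j-1) : ℝ))) (m+1)
        simp only [Nat.cast_zero, Nat.cast_add, Nat.cast_one, Nat.add_sub_cancel] at e
        rw [e]
        norm_num
      · rw [Finset.sum_range_succ (fun j => s2*((m:ℝ)+1-(j:ℝ))^2 * p j / (((m:ℝ)+1) * (Nat.choose m j : ℝ))) (m+1)]
        have h0 : ((m:ℝ)+1-((m+1:ℕ):ℝ)) = 0 := by push_cast; ring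
        rw [h0]
        norm_num
    · rw [Finset.sum_range_succ (fun j => 2*((j:ℝ)+1)*((m:ℝ)+1-(j:ℝ)) * q j / (((m:ℝ)+1) * (Nat.choose m j : ℝ))) (m+1)]
      have h0 : ((m:ℝ)+1-((m+1:ℕ):ℝ)) = 0 := by push_cast; ring
      rw [h0]
      norm_num
  rw [rhs2, Finset.mul_sum, ← Finset.sum_add_distrib]
  apply Finset.sum_congr rfl
  intro j hj
  have hj' : j ≤ m + 1 := by simpa [Nat.lt_succ_iff] using Finset.mem_range.mp hj
  have key := perj m j hj' s2 (p j) (q j) (fun h => by rw [h]; exact hq)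
  linear_combination key

private lemma core_sq (m : ℕ) (g : Polynomial ℂ) (hg : g.natDegree < m+2) (z : ℂ) :
    Complex.normSq z * ∑ j ∈ range (m+2+1), Complex.normSq (g.coeff j) / (Nat.choose (m+2) j : ℝ)
    ≤ ((m:ℝ)+2) * ∑ i ∈ range (m+2+1), Complex.normSq (((X - C z) * g).coeff i) / (Nat.choose (m+2) i : ℝ) := by
  have hs2 : 0 ≤ Complex.normSq z := Complex.normSq_nonneg z
  have hae : ∀ j, m + 2 ≤ j → g.coeff j = 0 := fun j hj =>
    Polynomial.coeff_eq_zero_of_natDegree_lt (lt_of_lt_of_le hg hj)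
  have hp0 : Complex.normSq (g.coeff (m+2)) = 0 := by rw [hae (m+2) le_rfl]; simp
  have hq0 : (g.coeff (m+1) * (starRingEnd ℂ) (z * g.coeff (m+1+1))).re = 0 := by
    rw [hae (m+2) le_rfl]; simp
  have hfc0 : ((X - C z) * g).coeff 0 = -(z * g.coeff 0) := by
    rw [Polynomial.mul_coeff_zero]
    simp [Polynomial.coeff_sub]
  have hfc : ∀ i, ((X - C z) * g).coeff (i+1) = g.coeff i - z * g.coeff (i+1) := by
    intro i
    rw [sub_mul, Polynomial.coeff_sub, Polynomial.coeff_X_mul, Polynomial.coeff_C_mul]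
  -- rewrite the f-sum
  have e1 : ∑ i ∈ range (m+2+1), Complex.normSq (((X - C z) * g).coeff i) / (Nat.choose (m+2) i : ℝ)
      = ∑ i ∈ range (m+2), (Complex.normSq (g.coeff i)
            + Complex.normSq z * Complex.normSq (g.coeff (i+1))
            - 2 * (g.coeff i * (starRingEnd ℂ) (z * g.coeff (i+1))).re)
          / (Nat.choose (m+2) (i+1) : ℝ)
        + Complex.normSq z * Complex.normSq (g.coeff 0) := by
    rw [Finset.sum_range_succ']
    congr 1
    · apply Finset.sum_congr rfl
      intro i _
      rw [hfc i, Complex.normSq_sub, Complex.normSq_mul]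
    · rw [hfc0]
      simp [Complex.normSq_neg, Complex.normSq_mul]
  have key := sum_identity m (Complex.normSq z)
      (fun j => Complex.normSq (g.coeff j))
      (fun j => (g.coeff j * (starRingEnd ℂ) (z * g.coeff (j+1))).re)
      hp0 hq0
  -- R ≥ 0
  have hR : 0 ≤ ∑ k ∈ range (m+1),
      ( ((k:ℝ)+1)^2 * Complex.normSq (g.coeff (k+1))
        + Complex.normSq z * ((m:ℝ)+1-(k:ℝ))^2 * Complex.normSq (g.coeff k)
        - 2*((k:ℝ)+1)*((m:ℝ)+1-(k:ℝ)) * (g.coeff k * (starRingEnd ℂ) (z * g.coeff (k+1))).re )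
        / (((m:ℝ)+1) * (Nat.choose m k : ℝ)) := by
    apply Finset.sum_nonneg
    intro k _
    apply div_nonneg _ (by positivity)
    have expand : ((k:ℝ)+1)^2 * Complex.normSq (g.coeff (k+1))
        + Complex.normSq z * ((m:ℝ)+1-(k:ℝ))^2 * Complex.normSq (g.coeff k)
        - 2*((k:ℝ)+1)*((m:ℝ)+1-(k:ℝ)) * (g.coeff k * (starRingEnd ℂ) (z * g.coeff (k+1))).re
        = Complex.normSq ((((k:ℝ)+1 : ℝ) : ℂ) * g.coeff (k+1)
            - (starRingEnd ℂ) z * ((((m:ℝ)+1-(k:ℝ) : ℝ)) : ℂ) * g.coeff k) := by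
      simp only [Complex.normSq_apply, Complex.mul_re, Complex.mul_im, Complex.sub_re,
        Complex.sub_im, Complex.conj_re, Complex.conj_im, Complex.ofReal_re, Complex.ofReal_im]
      ring
    rw [expand]
    exact Complex.normSq_nonneg _
  -- drop last term of the g-sum
  have e2 : ∑ j ∈ range (m+2+1), Complex.normSq (g.coeff j) / (Nat.choose (m+2) j : ℝ)
      = ∑ j ∈ range (m+2), Complex.normSq (g.coeff j) / (Nat.choose (m+2) j : ℝ) := by
    rw [Finset.sum_range_succ]
    rw [hp0]
    simp
  rw [e2, e1]
  -- termwise comparison to the (m+1)-binomial sum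
  have t1 : Complex.normSq z * ∑ j ∈ range (m+2), Complex.normSq (g.coeff j) / (Nat.choose (m+2) j : ℝ)
      ≤ (1 + Complex.normSq z) * ∑ j ∈ range (m+2), Complex.normSq (g.coeff j) / (Nat.choose (m+1) j : ℝ) := by
    rw [Finset.mul_sum, Finset.mul_sum]
    apply Finset.sum_le_sum
    intro j hj
    have hj' : j ≤ m + 1 := by
      have := Finset.mem_range.mp hj; omega
    have hpos : (0:ℝ) < (Nat.choose (m+1) j : ℝ) := by
      exact_mod_cast Nat.cast_pos.mpr (Nat.choose_pos hj')
    have hle : (Nat.choose (m+1) j : ℝ) ≤ (Nat.choose (m+2) j : ℝ) := by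
      exact_mod_cast Nat.choose_le_choose j (Nat.le_succ (m+1))
    have hdiv : Complex.normSq (g.coeff j) / (Nat.choose (m+2) j : ℝ)
        ≤ Complex.normSq (g.coeff j) / (Nat.choose (m+1) j : ℝ) :=
      div_le_div_of_nonneg_left (Complex.normSq_nonneg _) hpos hle
    calc Complex.normSq z * (Complex.normSq (g.coeff j) / (Nat.choose (m+2) j : ℝ))
        ≤ Complex.normSq z * (Complex.normSq (g.coeff j) / (Nat.choose (m+1) j : ℝ)) :=
          mul_le_mul_of_nonneg_left hdiv hs2
      _ ≤ (1 + Complex.normSq z) * (Complex.normSq (g.coeff j) / (Nat.choose (m+1) j : ℝ)) := by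
          apply mul_le_mul_of_nonneg_right (by linarith)
          exact div_nonneg (Complex.normSq_nonneg _) hpos.le
  linarith [t1, key, hR]


private lemma weylNorm_eq (m : ℕ) (p : Polynomial ℂ) :
    weylNorm m p = Real.sqrt (∑ i ∈ Finset.range (m + 1),
      Complex.normSq (p.coeff i) / (Nat.choose m i : ℝ)) := by
  unfold weylNorm
  congr 1
  exact Finset.sum_congr rfl (fun i _ => by rw [Complex.sq_norm])

private lemma weylNorm_nonneg (m : ℕ) (p : Polynomial ℂ) : 0 ≤ weylNorm m p :=
  Real.sqrt_nonneg _

private lemma core (m : ℕ) (g : Polynomial ℂ) (hg : g.natDegree < m+2) (z : ℂ) :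
    ‖z‖ * weylNorm (m+2) g
      ≤ Real.sqrt ((m:ℝ)+2) * weylNorm (m+2) ((X - C z) * g) := by
  have e := core_sq m g hg z
  rw [weylNorm_eq, weylNorm_eq]
  have l1 : ‖z‖ * Real.sqrt (∑ i ∈ Finset.range (m+2+1),
        Complex.normSq (g.coeff i) / (Nat.choose (m+2) i : ℝ))
      = Real.sqrt (Complex.normSq z * ∑ i ∈ Finset.range (m+2+1),
        Complex.normSq (g.coeff i) / (Nat.choose (m+2) i : ℝ)) := by
    rw [Real.sqrt_mul (Complex.normSq_nonneg z), Complex.norm_def]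
  have l2 : Real.sqrt ((m:ℝ)+2) * Real.sqrt (∑ i ∈ Finset.range (m+2+1),
        Complex.normSq (((X - C z) * g).coeff i) / (Nat.choose (m+2) i : ℝ))
      = Real.sqrt (((m:ℝ)+2) * ∑ i ∈ Finset.range (m+2+1),
        Complex.normSq (((X - C z) * g).coeff i) / (Nat.choose (m+2) i : ℝ)) := by
    rw [Real.sqrt_mul (by positivity)]
  rw [l1, l2]
  exact Real.sqrt_le_sqrt e

private lemma weylNorm_smul (m : ℕ) (c : ℂ) (p : Polynomial ℂ) :
    weylNorm m (C c * p) = ‖c‖ * weylNorm m p := by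
  rw [weylNorm_eq, weylNorm_eq]
  have hc : ∀ i ∈ Finset.range (m+1),
      Complex.normSq ((C c * p).coeff i) / (Nat.choose m i : ℝ)
        = Complex.normSq c * (Complex.normSq (p.coeff i) / (Nat.choose m i : ℝ)) := by
    intro i _
    rw [Polynomial.coeff_C_mul, Complex.normSq_mul]
    ring
  rw [Finset.sum_congr rfl hc, ← Finset.mul_sum,
    Real.sqrt_mul (Complex.normSq_nonneg c), Complex.norm_def]

private lemma one_le_weylNorm (d : ℕ) (f : Polynomial ℂ) (hc : f.coeff d = 1) :
    1 ≤ weylNorm d f := by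
  unfold weylNorm
  have hmem : d ∈ Finset.range (d+1) := Finset.self_mem_range_succ d
  have hterm : ‖f.coeff d‖ ^ 2 / ((Nat.choose d d : ℕ) : ℝ) = 1 := by
    rw [hc]; simp
  have hsum : (1:ℝ) ≤ ∑ i ∈ Finset.range (d+1),
      ‖f.coeff i‖ ^ 2 / ((Nat.choose d i : ℕ) : ℝ) := by
    rw [← hterm]
    exact Finset.single_le_sum
      (f := fun i => ‖f.coeff i‖ ^ 2 / ((Nat.choose d i : ℕ) : ℝ))
      (fun i _ => by positivity) hmem
  calc (1:ℝ) = Real.sqrt 1 := by simp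
    _ ≤ _ := Real.sqrt_le_sqrt hsum


private lemma h0_mem (d : ℕ) (hd : 2 ≤ d) : (X^d - X^(d-2) : Polynomial ℂ) ∈ SigmaG d := by
  obtain ⟨e, rfl⟩ : ∃ e, d = e + 2 := ⟨d - 2, by omega⟩
  refine ⟨?_, 1, -1, by norm_num, ?_, ?_, by simp⟩
  · have hlt : (X^(e+2-2) : Polynomial ℂ).natDegree < (X^(e+2) : Polynomial ℂ).natDegree := by
      simp [Polynomial.natDegree_X_pow]
    rw [Polynomial.natDegree_sub_eq_left_of_natDegree_lt hlt, Polynomial.natDegree_X_pow]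
  · simp [Polynomial.IsRoot]
  · show Polynomial.eval (-1) _ = 0
    rw [show e+2-2 = e from rfl]
    simp only [Polynomial.eval_sub, Polynomial.eval_pow, Polynomial.eval_X]
    rw [pow_succ, pow_succ]
    ring


set_option maxHeartbeats 1600000 in
/-- Condition Number Theorem for Graeffe iteration:
`ρ(f) ≥ d_P(f, Σ_G)/√d`, where `ρ(f) = min_{|ζᵢ|<|ζⱼ|} (1 - |ζᵢ|/|ζⱼ|)` and
`d_P(f, Σ_G) = inf_{h ∈ Σ_G, λ ∈ ℂ} ‖f - λh‖_d/‖f‖_d`. -/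
theorem graeffe_condition_number (d : ℕ) (hd : 2 ≤ d) (ζ : Fin d → ℂ)
    (f : Polynomial ℂ) (hf : f = ∏ i, (X - C (ζ i)))
    (hmod : ∀ i j : Fin d, i ≠ j → ‖ζ i‖ ≠ ‖ζ j‖) :
    sInf {r : ℝ | ∃ i j : Fin d, ‖ζ i‖ < ‖ζ j‖ ∧
        r = 1 - ‖ζ i‖ / ‖ζ j‖} ≥
      sInf {r : ℝ | ∃ h ∈ SigmaG d, ∃ lam : ℂ,
        r = weylNorm d (f - C lam * h) / weylNorm d f} / Real.sqrt d := by
  classical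
  set P := {r : ℝ | ∃ i j : Fin d, ‖ζ i‖ < ‖ζ j‖ ∧
      r = 1 - ‖ζ i‖ / ‖ζ j‖} with hPdef
  set S := {r : ℝ | ∃ h ∈ SigmaG d, ∃ lam : ℂ,
      r = weylNorm d (f - C lam * h) / weylNorm d f} with hSdef
  -- facts about f
  have hfmon : ∀ i ∈ (Finset.univ : Finset (Fin d)), (X - C (ζ i)).Monic :=
    fun i _ => monic_X_sub_C (ζ i)
  have hfdeg : f.natDegree = d := by
    rw [hf, natDegree_prod_of_monic _ _ hfmon]
    simp [natDegree_X_sub_C]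
  have hfc1 : f.coeff d = 1 := by
    have : f.Monic := by rw [hf]; exact monic_prod_of_monic _ _ hfmon
    have := this.coeff_natDegree
    rwa [hfdeg] at this
  have hF1 : 1 ≤ weylNorm d f := one_le_weylNorm d f hfc1
  have hF0 : 0 < weylNorm d f := lt_of_lt_of_le one_pos hF1
  -- S bounded below
  have hSbdd : BddBelow S := by
    refine ⟨0, fun r hr => ?_⟩
    obtain ⟨h, _, lam, rfl⟩ := hr
    exact div_nonneg (weylNorm_nonneg _ _) (weylNorm_nonneg _ _)
  -- P finite and nonempty
  have hPfin : P.Finite := by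
    have hsub : P ⊆ (fun ij : Fin d × Fin d =>
        1 - ‖ζ ij.1‖ / ‖ζ ij.2‖) '' Set.univ := by
      rintro r ⟨i, j, _, rfl⟩
      exact ⟨(i, j), Set.mem_univ _, rfl⟩
    exact Set.Finite.subset (Set.Finite.image _ Set.finite_univ) hsub
  have hPne : P.Nonempty := by
    have hne : (⟨0, by omega⟩ : Fin d) ≠ (⟨1, by omega⟩ : Fin d) := by
      simp [Fin.ext_iff]
    rcases lt_or_gt_of_ne (hmod _ _ hne) with hc | hc
    · exact ⟨_, ⟨0, by omega⟩, ⟨1, by omega⟩, hc, rfl⟩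
    · exact ⟨_, ⟨1, by omega⟩, ⟨0, by omega⟩, hc, rfl⟩
  obtain ⟨i0, j0, hlt, hEq⟩ := hPne.csInf_mem hPfin
  have hsd : (0:ℝ) < Real.sqrt d := Real.sqrt_pos.mpr (by positivity)
  rw [ge_iff_le, div_le_iff₀ hsd]
  -- basic moduli facts
  have hzpos : 0 < ‖ζ j0‖ := lt_of_le_of_lt (norm_nonneg _) hlt
  have htlt1 : ‖ζ i0‖ / ‖ζ j0‖ < 1 := (div_lt_one hzpos).mpr hlt
  have htnn : 0 ≤ ‖ζ i0‖ / ‖ζ j0‖ :=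
    div_nonneg (norm_nonneg _) hzpos.le
  have hρ0 : 0 ≤ sInf P := by rw [hEq]; linarith
  rcases le_or_gt 1 (sInf P * Real.sqrt d) with hcase | hcase
  · -- easy case : 1 ∈ S suffices
    have h1S : (1:ℝ) ∈ S := by
      refine ⟨X^d - X^(d-2), h0_mem d hd, 0, ?_⟩
      rw [map_zero, zero_mul, sub_zero, div_self hF0.ne']
    exact le_trans (csInf_le hSbdd h1S) hcase
  · -- main case
    have hone_le_sqrt : (1:ℝ) ≤ Real.sqrt d := by
      rw [show (1:ℝ) = Real.sqrt 1 by simp]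
      exact Real.sqrt_le_sqrt (by exact_mod_cast (by omega : 1 ≤ d))
    have hρlt1 : sInf P < 1 :=
      lt_of_le_of_lt (le_mul_of_one_le_right hρ0 hone_le_sqrt) hcase
    have hi0pos : 0 < ‖ζ i0‖ := by
      rcases eq_or_lt_of_le (norm_nonneg (ζ i0)) with he | hl
      · exfalso
        rw [hEq] at hρlt1
        rw [← he] at hρlt1
        simp at hρlt1
      · exact hl
    -- decompose f
    set z := ζ j0 with hzdef
    set g := ∏ k ∈ Finset.univ.erase j0, (X - C (ζ k)) with hgdef
    have hfg : f = (X - C z) * g := by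
      rw [hf, hzdef]
      exact (Finset.mul_prod_erase Finset.univ _ (Finset.mem_univ j0)).symm
    have hgdeg : g.natDegree = d - 1 := by
      rw [hgdef, natDegree_prod_of_monic _ _ (fun i _ => monic_X_sub_C (ζ i))]
      simp [natDegree_X_sub_C, Finset.card_erase_of_mem]
    have hgdeg' : g.natDegree < d := by omega
    -- core inequality
    have hcore : ‖z‖ * weylNorm d g ≤ Real.sqrt d * weylNorm d f := by
      obtain ⟨m, rfl⟩ : ∃ m, d = m + 2 := ⟨d - 2, by omega⟩
      rw [hfg]
      have := core m g hgdeg' z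
      have hcast : Real.sqrt ((m:ℝ)+2) = Real.sqrt ((m+2 : ℕ) : ℝ) := by push_cast; ring_nf
      rwa [hcast] at this
    set G := weylNorm d g with hGdef
    have hG0 : 0 ≤ G := weylNorm_nonneg _ _
    set F := weylNorm d f with hFdef
    clear_value G F
    -- ε-argument
    apply le_of_forall_pos_le_add
    intro ε hε
    set ε' := ε * F / (G + 1) with hε'def
    have hε'0 : 0 < ε' := by
      apply div_pos (mul_pos hε hF0) (by linarith)
    -- construct the perturbed root w
    set t := ‖ζ i0‖ / ‖z‖ with htdef
    have hw : ∃ w : ℂ, ‖w‖ = ‖ζ i0‖ ∧ w ≠ ζ i0 ∧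
        ‖w - z‖ ≤ sInf P * ‖z‖ + ε' := by
      have habs_t : ‖((t:ℝ):ℂ) * z‖ = ‖ζ i0‖ := by
        rw [norm_mul, Complex.norm_real, Real.norm_eq_abs, abs_of_nonneg htnn, htdef,
          div_mul_cancel₀ _ hzpos.ne']
      have hdist : ‖((t:ℝ):ℂ) * z - z‖ = sInf P * ‖z‖ := by
        have : ((t:ℝ):ℂ) * z - z = ((t - 1 : ℝ):ℂ) * z := by push_cast; ring
        rw [this, norm_mul, Complex.norm_real, Real.norm_eq_abs, abs_of_nonpos (by linarith), hEq]
        ring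
      by_cases hcol : ((t:ℝ):ℂ) * z = ζ i0
      · -- collision : rotate slightly
        set A := ‖ζ i0‖ with hAdef
        set θ := min 1 (ε' / (2 * A + 1)) with hθdef
        have hθpos : 0 < θ := lt_min one_pos (by positivity)
        have hθ1 : θ ≤ 1 := min_le_left _ _
        have hθ2 : θ ≤ ε' / (2 * A + 1) := min_le_right _ _
        clear_value θ
        refine ⟨Complex.exp (θ * Complex.I) * ζ i0, ?_, ?_, ?_⟩
        · rw [norm_mul, Complex.norm_exp_ofReal_mul_I, one_mul]
        · intro hcontra
          have hζne : ζ i0 ≠ 0 := by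
            intro h0
            rw [hAdef, h0] at hi0pos
            simp at hi0pos
          have hexp1 : Complex.exp (θ * Complex.I) = 1 := by
            have h2 : Complex.exp (θ * Complex.I) * ζ i0 = 1 * ζ i0 := by
              rw [one_mul]; exact hcontra
            exact mul_right_cancel₀ hζne h2
          obtain ⟨n, hn⟩ := Complex.exp_eq_one_iff.mp hexp1
          have hI : (Complex.I : ℂ) ≠ 0 := Complex.I_ne_zero
          have : (θ:ℂ) = (n:ℂ) * (2 * (Real.pi:ℝ)) := by
            have h2 : (θ:ℂ) * Complex.I = ((n:ℂ) * (2 * (Real.pi:ℝ))) * Complex.I := by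
              rw [hn]; push_cast; ring
            exact mul_right_cancel₀ hI h2
          have hθeq : θ = (n:ℝ) * (2 * Real.pi) := by exact_mod_cast this
          have hpi := Real.pi_gt_three
          rcases le_or_gt n 0 with hn0 | hn0
          · have : (n:ℝ) ≤ 0 := by exact_mod_cast hn0
            nlinarith
          · have : (1:ℝ) ≤ (n:ℝ) := by exact_mod_cast hn0
            nlinarith
        · have hsplit : Complex.exp (θ * Complex.I) * ζ i0 - z
              = (Complex.exp (θ * Complex.I) - 1) * ζ i0 + (((t:ℝ):ℂ) * z - z) := by
            rw [hcol]; ring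
          rw [hsplit]
          calc ‖(Complex.exp (θ * Complex.I) - 1) * ζ i0 + (((t:ℝ):ℂ) * z - z)‖
              ≤ ‖(Complex.exp (θ * Complex.I) - 1) * ζ i0‖
                + ‖((t:ℝ):ℂ) * z - z‖ := norm_add_le _ _
            _ ≤ 2 * θ * A + sInf P * ‖z‖ := by
                rw [hdist, norm_mul]
                have habsθI : ‖(θ:ℂ) * Complex.I‖ = θ := by
                  rw [norm_mul, Complex.norm_real, Real.norm_eq_abs, Complex.norm_I, mul_one, abs_of_pos hθpos]
                have hexp_bound : ‖Complex.exp ((θ:ℂ) * Complex.I) - 1‖ ≤ 2 * θ := by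
                  have := Complex.norm_exp_sub_one_le (x := (θ:ℂ) * Complex.I) (by rw [habsθI]; exact hθ1)
                  rwa [habsθI] at this
                have hfin : ‖Complex.exp ((θ:ℂ) * Complex.I) - 1‖ * ‖ζ i0‖ ≤ 2*θ*A := by
                  rw [hAdef]
                  exact mul_le_mul_of_nonneg_right hexp_bound (norm_nonneg _)
                linarith
            _ ≤ sInf P * ‖z‖ + ε' := by
                have h2θA : 2 * θ * A ≤ ε' := by
                  have hA0 : 0 ≤ A := norm_nonneg _
                  have h2A : (0:ℝ) < 2 * A + 1 := by positivity
                  have hstep : 2 * θ * A ≤ 2 * (ε' / (2 * A + 1)) * A := by nlinarith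
                  have h2 : 2 * (ε' / (2 * A + 1)) * A ≤ ε' := by
                    rw [show 2 * (ε' / (2 * A + 1)) * A = (2 * A * ε') / (2 * A + 1) by ring,
                      div_le_iff₀ h2A]
                    nlinarith
                  linarith
                linarith
      · -- no collision
        exact ⟨((t:ℝ):ℂ) * z, habs_t, hcol, by rw [hdist]; linarith⟩
    obtain ⟨w, hwabs, hwne, hwdist⟩ := hw
    -- the perturbed polynomial
    set h := (X - C w) * g with hhdef
    have hhmem : h ∈ SigmaG d := by
      refine ⟨?_, w, ζ i0, hwne, ?_, ?_, by rw [hwabs]⟩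
      · rw [hhdef, natDegree_mul (X_sub_C_ne_zero w) ?gne]
        · rw [natDegree_X_sub_C, hgdeg]; omega
        · case gne =>
            rw [hgdef]
            apply Finset.prod_ne_zero_iff.mpr
            intro k _
            exact X_sub_C_ne_zero (ζ k)
      · show Polynomial.eval w h = 0
        rw [hhdef]
        simp
      · show Polynomial.eval (ζ i0) h = 0
        rw [hhdef, Polynomial.eval_mul]
        apply mul_eq_zero_of_right
        rw [hgdef, Polynomial.eval_prod]
        apply Finset.prod_eq_zero (Finset.mem_erase.mpr ⟨fun hij => ?_, Finset.mem_univ i0⟩)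
        · simp
        · rw [hij] at hlt; exact lt_irrefl _ hlt
    have hdiff : f - C 1 * h = C (w - z) * g := by
      rw [hfg, hhdef, map_one, one_mul, Polynomial.C_sub]
      ring
    have hmem : weylNorm d (f - C 1 * h) / F ∈ S := ⟨h, hhmem, 1, by rw [hFdef]⟩
    refine le_trans (csInf_le hSbdd hmem) ?_
    rw [hdiff, weylNorm_smul, ← hGdef]
    -- final bound
    have hzG : ‖z‖ * G ≤ Real.sqrt d * F := hcore
    have hb1 : ‖w - z‖ * G ≤ (sInf P * ‖z‖ + ε') * G :=
      mul_le_mul_of_nonneg_right hwdist hG0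
    have hb2 : (sInf P * ‖z‖) * G ≤ sInf P * (Real.sqrt d * F) := by
      calc (sInf P * ‖z‖) * G = sInf P * (‖z‖ * G) := by ring
        _ ≤ sInf P * (Real.sqrt d * F) := mul_le_mul_of_nonneg_left hzG hρ0
    have hb3 : ε' * G ≤ ε * F := by
      have hG1 : (0:ℝ) < G + 1 := by linarith
      rw [hε'def, show ε * F / (G + 1) * G = (ε * F * G) / (G + 1) by ring,
        div_le_iff₀ hG1]
      nlinarith
    rw [div_le_iff₀ hF0]
    calc ‖w - z‖ * G ≤ (sInf P * ‖z‖ + ε') * G := hb1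
      _ = (sInf P * ‖z‖) * G + ε' * G := by ring
      _ ≤ sInf P * (Real.sqrt d * F) + ε * F := by linarith
      _ = (sInf P * Real.sqrt d + ε) * F := by ring
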